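/- Let g be an entire function with g([-1,1]) ⊆ [-1,1] and λ(g) ≤ 1, and let (P_n)_{n≥1} be holomorphic functions on [-1,1]_σ (σ > 0) with P_n([-1,1]) ⊆ [-1,1] and λ(P_n) ≤ 1 for every n ≥ 1. Then the sequence (g ∘ P_n)_{n≥1} verifies the E(1) property; more precisely, for every A ∈ (0, min(1/2, σ)) and all integers p ≥ 1 and n ≥ 1 one has (g ∘ P_n)([-1,1]_{1,A,p+1}) ⊆ [-1,1]_{1,A,p}. -/

import Mathlib

open Metric Set Filter

noncomputable section

/-- The segment `[-1,1]` viewed inside `ℂ`. -/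
def seg : Set ℂ := (fun x : ℝ => (x : ℂ)) '' Set.Icc (-1) 1

/-- The neighborhood `[-1,1]_r` of the segment. -/
def nbd (r : ℝ) : Set ℂ := {z : ℂ | Metric.infDist z seg < r}

/-- The set `[-1,1]_{k,A,n}`. -/
def tube (k A : ℝ) (n : ℕ) : Set ℂ :=
  {z : ℂ | Metric.infDist z seg < A * (n : ℝ) ^ (-(1 : ℝ) / k)}

/-- Sup norm of `f` on `S`. -/
def supOn (f : ℂ → ℂ) (S : Set ℂ) : ℝ := sSup ((fun z => ‖f z‖) '' S)

/-- The Gevrey class `G_k([-1,1])`. -/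
def GevreyClass (k : ℝ) (f : ℝ → ℂ) : Prop :=
  ContDiffOn ℝ (⊤ : ℕ∞) f (Set.Icc (-1) 1) ∧
  ∃ C > 0, ∃ A > 0, ∀ n : ℕ, ∀ x ∈ Set.Icc (-1 : ℝ) 1,
    ‖iteratedDerivWithin n f (Set.Icc (-1 : ℝ) 1) x‖ ≤
      C * A ^ n * (n : ℝ) ^ ((n : ℝ) * (1 + 1 / k))

/-- `(f_n)_{n ≥ 1}` is a `k`-sequence. -/
def IsKSeq (k : ℝ) (f : ℕ → ℂ → ℂ) : Prop :=
  ∃ B > 0, ∃ C > 0, ∃ θ ∈ Set.Ioo (0 : ℝ) 1, ∀ n : ℕ, 1 ≤ n →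
    DifferentiableOn ℂ (f n) (tube k B n) ∧ ∀ z ∈ tube k B n, ‖f n z‖ ≤ C * θ ^ n

/-- The `E(k)` property with threshold `τ` for a sequence of functions on `[-1,1]_σ`. -/
def EPropWith (k σ : ℝ) (φ : ℕ → ℂ → ℂ) (τ : ℝ) : Prop :=
  0 < τ ∧ τ ≤ σ ∧ ∀ A : ℝ, 0 < A → A ≤ τ → ∃ M : ℕ, ∀ n : ℕ, M ≤ n → ∀ p : ℕ,
    ∀ z ∈ tube k A (n + 1), φ p z ∈ tube k A n

/-- The `E(k)` property. -/
def EProp (k σ : ℝ) (φ : ℕ → ℂ → ℂ) : Prop := ∃ τ : ℝ, EPropWith k σ φ τ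

/-- `T` is a linear operator on functions. -/
def IsLinOp (T : (ℂ → ℂ) → ℂ → ℂ) : Prop :=
  (∀ f g : ℂ → ℂ, T (f + g) = T f + T g) ∧ ∀ (c : ℂ) (f : ℂ → ℂ), T (c • f) = c • T f

/-- The quantitative part of the `A(k)` property, for a given `A` and integer `N = N(A)`. -/
def APropAt (k : ℝ) (T : (ℂ → ℂ) → ℂ → ℂ) (ρ A : ℝ) (N : ℕ) : Prop :=
  ∀ n : ℕ, N ≤ n → ∀ f : ℂ → ℂ, DifferentiableOn ℂ f (tube k A n) →
    BddAbove ((fun z => ‖f z‖) '' tube k A n) →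
    DifferentiableOn ℂ (T f) (tube k A (n + 1)) ∧
      ∀ z ∈ tube k A (n + 1), ‖T f z‖ ≤ ρ * supOn f (tube k A n)

/-- The `A(k)` property with `k`-threshold `τ` and contraction constant `ρ`. -/
def AProp (k : ℝ) (T : (ℂ → ℂ) → ℂ → ℂ) (τ ρ : ℝ) : Prop :=
  0 < τ ∧ ρ ∈ Set.Ioo (0 : ℝ) 1 ∧
  (∀ A : ℝ, 0 < A → A ≤ τ → ∃ N : ℕ, APropAt k T ρ A N) ∧
  (∀ f : ℂ → ℂ, (∃ r > 0, DifferentiableOn ℂ f (nbd r)) →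
      ∀ z ∈ seg, ‖T f z‖ ≤ ρ * supOn f seg)
lemma seg_compact : IsCompact seg :=
  isCompact_Icc.image Complex.continuous_ofReal

lemma seg_nonempty : seg.Nonempty := ⟨0, ⟨0, by norm_num, by norm_num⟩⟩

lemma key (f : ℂ → ℂ) (R : ℝ) (hf : DifferentiableOn ℂ f (nbd R))
    (hfseg : ∀ z ∈ seg, f z ∈ seg)
    (hlam : ∀ m : ℕ, 1 ≤ m → ∀ z ∈ seg, ‖iteratedDeriv m f z‖ ≤ (m.factorial : ℝ))
    (w : ℂ) (r : ℝ) (hr1 : r < 1) (hrR : r ≤ R) (hd : Metric.infDist w seg < r) :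
    Metric.infDist (f w) seg < r / (1 - r) := by
  obtain ⟨x, hx, hdx⟩ := seg_compact.exists_infDist_eq_dist seg_nonempty w
  set d := dist w x with hdd
  have hd0 : 0 ≤ d := dist_nonneg
  have hdr : d < r := by rw [← hdx]; exact hd
  have hr0 : 0 < r := lt_of_le_of_lt hd0 hdr
  have hd1 : d < 1 := hdr.trans hr1
  have hball : Metric.ball x R ⊆ nbd R := fun y hy =>
    lt_of_le_of_lt (Metric.infDist_le_dist_of_mem hx) hy
  have hfb : DifferentiableOn ℂ f (Metric.ball x R) := hf.mono hball
  have hw : w ∈ Metric.ball x R := by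
    rw [Metric.mem_ball]; exact hdr.trans_le hrR
  have hs := Complex.hasSum_taylorSeries_on_ball hfb hw
  set a : ℕ → ℂ := fun n => ((n.factorial : ℂ))⁻¹ • (w - x) ^ n • iteratedDeriv n f x
    with ha
  have ha0 : a 0 = f x := by simp [ha]
  have h1 : HasSum (fun n => a (n + 1)) (f w - f x) := by
    have := (hasSum_nat_add_iff' (f := a) 1).mpr hs
    simpa [ha0] using this
  have hbound : ∀ n : ℕ, ‖a (n + 1)‖ ≤ d ^ (n + 1) := by
    intro n
    have hD := hlam (n + 1) (by omega) x hx
    have hfac : (0:ℝ) < ((n+1).factorial : ℝ) := by positivity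
    have hwx : ‖w - x‖ = d := by rw [hdd, dist_eq_norm]
    have : ‖a (n + 1)‖ = (((n+1).factorial : ℝ))⁻¹ * (d ^ (n+1) * ‖iteratedDeriv (n+1) f x‖) := by
      rw [ha]
      rw [norm_smul, norm_smul, norm_pow, norm_inv, Complex.norm_natCast, hwx]
    rw [this]
    rw [inv_mul_le_iff₀ hfac]
    have hdp : (0:ℝ) ≤ d ^ (n+1) := by positivity
    calc d ^ (n+1) * ‖iteratedDeriv (n+1) f x‖ ≤ d ^ (n+1) * ((n+1).factorial : ℝ) := by
          exact mul_le_mul_of_nonneg_left hD hdp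
      _ = ((n+1).factorial : ℝ) * d ^ (n+1) := by ring
  have hgeo : HasSum (fun n : ℕ => d ^ (n + 1)) (d / (1 - d)) := by
    have := (hasSum_geometric_of_lt_one hd0 hd1).mul_left d
    simpa [div_eq_mul_inv, pow_succ'] using this
  have hSnorm : Summable (fun n => ‖a (n + 1)‖) :=
    Summable.of_nonneg_of_le (fun n => norm_nonneg _) hbound hgeo.summable
  have hnorm : ‖f w - f x‖ ≤ d / (1 - d) := by
    calc ‖f w - f x‖ = ‖∑' n, a (n + 1)‖ := by rw [h1.tsum_eq]
      _ ≤ ∑' n, ‖a (n + 1)‖ := norm_tsum_le_tsum_norm hSnorm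
      _ ≤ ∑' n : ℕ, d ^ (n + 1) := Summable.tsum_le_tsum hbound hSnorm hgeo.summable
      _ = d / (1 - d) := hgeo.tsum_eq
  have hmono : d / (1 - d) < r / (1 - r) := by
    rw [div_lt_div_iff₀ (by linarith) (by linarith)]
    nlinarith
  calc Metric.infDist (f w) seg ≤ dist (f w) (f x) :=
        Metric.infDist_le_dist_of_mem (hfseg x hx)
    _ = ‖f w - f x‖ := by rw [dist_eq_norm]
    _ ≤ d / (1 - d) := hnorm
    _ < r / (1 - r) := hmono

theorem comp_E1 (σ : ℝ) (hσ : 0 < σ) (g : ℂ → ℂ) (hg : Differentiable ℂ g)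
    (hgseg : ∀ z ∈ seg, g z ∈ seg)
    (hglam : ∀ n : ℕ, 1 ≤ n → ∀ z ∈ seg, ‖iteratedDeriv n g z‖ ≤ (n.factorial : ℝ))
    (P : ℕ → ℂ → ℂ)
    (hPd : ∀ n : ℕ, 1 ≤ n → DifferentiableOn ℂ (P n) (nbd σ))
    (hPseg : ∀ n : ℕ, 1 ≤ n → ∀ z ∈ seg, P n z ∈ seg)
    (hPlam : ∀ n : ℕ, 1 ≤ n → ∀ m : ℕ, 1 ≤ m → ∀ z ∈ seg,
      ‖iteratedDeriv m (P n) z‖ ≤ (m.factorial : ℝ)) :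
    EProp 1 σ (fun n : ℕ => g ∘ P (n + 1)) ∧
    ∀ A : ℝ, 0 < A → A < min (1 / 2) σ → ∀ p : ℕ, 1 ≤ p → ∀ n : ℕ, 1 ≤ n →
      ∀ z ∈ tube 1 A (p + 1), g (P n z) ∈ tube 1 A p := by
  have main : ∀ A : ℝ, 0 < A → A < min (1 / 2) σ → ∀ p : ℕ, 1 ≤ p → ∀ n : ℕ, 1 ≤ n →
      ∀ z ∈ tube 1 A (p + 1), g (P n z) ∈ tube 1 A p := by
    intro A hA0 hA p hp n hn z hz
    have hA2 : A < 1/2 := lt_of_lt_of_le hA (min_le_left _ _)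
    have hAσ : A < σ := lt_of_lt_of_le hA (min_le_right _ _)
    have hq : (1:ℝ) ≤ (p:ℝ) := by exact_mod_cast hp
    set q : ℝ := (p:ℝ) with hqdef
    have hq0 : 0 < q := by linarith
    have hz' : Metric.infDist z seg < A / (q + 1) := by
      simp only [tube, Set.mem_setOf_eq] at hz
      have hcast : ((p+1 : ℕ) : ℝ) ^ (-(1:ℝ)/1) = (q+1)⁻¹ := by
        push_cast
        rw [show (-(1:ℝ)/1) = -1 by norm_num, Real.rpow_neg_one]
      rw [hcast] at hz
      rw [div_eq_mul_inv]; exact hz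
    set r1 : ℝ := A / (q + 1) with hr1def
    have hr1lt : r1 < 1 := by
      rw [hr1def, div_lt_one (by linarith)]; linarith
    have hr1σ : r1 ≤ σ := by
      have : r1 ≤ A := by
        rw [hr1def, div_le_iff₀ (by linarith)]; nlinarith
      linarith
    have step1 := key (P n) σ (hPd n hn) (hPseg n hn) (hPlam n hn) z r1 hr1lt hr1σ hz'
    set r2 : ℝ := A / (q + 1 - A) with hr2def
    have hden2 : 0 < q + 1 - A := by linarith
    have he1 : r1 / (1 - r1) = r2 := by
      rw [hr1def, hr2def]
      have h1 : q + 1 ≠ 0 := by linarith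
      have h2 : q + 1 - A ≠ 0 := ne_of_gt hden2
      field_simp
    rw [he1] at step1
    have hr2lt : r2 < 1 := by rw [hr2def, div_lt_one hden2]; linarith
    have step2 := key g 1 hg.differentiableOn hgseg hglam (P n z) r2 hr2lt hr2lt.le step1
    have hden3 : 0 < q + 1 - 2*A := by linarith
    have h1r2 : 0 < 1 - r2 := by linarith
    have he2 : r2 / (1 - r2) = A / (q + 1 - 2*A) := by
      rw [div_eq_div_iff (ne_of_gt h1r2) (ne_of_gt hden3), hr2def]
      have h2 : q + 1 - A ≠ 0 := ne_of_gt hden2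
      field_simp
      ring
    have hfin : r2 / (1 - r2) ≤ A / q := by
      rw [he2, div_le_div_iff₀ hden3 hq0]
      nlinarith
    simp only [tube, Set.mem_setOf_eq]
    have hcast : ((p : ℕ) : ℝ) ^ (-(1:ℝ)/1) = q⁻¹ := by
      rw [show (-(1:ℝ)/1) = -1 by norm_num, Real.rpow_neg_one]
    rw [hcast, ← div_eq_mul_inv]
    exact lt_of_lt_of_le step2 hfin
  refine ⟨⟨min (1/2) σ / 2, ?_, ?_, ?_⟩, main⟩
  · have hm : 0 < min (1/2) σ := lt_min (by norm_num) hσ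
    linarith
  · have : min (1/2) σ ≤ σ := min_le_right _ _
    linarith
  · intro A hA0 hAle
    have hm : 0 < min (1/2) σ := lt_min (by norm_num) hσ
    refine ⟨1, fun n hn p z hz => ?_⟩
    exact main A hA0 (lt_of_le_of_lt hAle (by linarith)) n hn (p+1) (by omega) z hz
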